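/- Let S11, S22, S33 be nonnegative reals and g12, g23, g13 complex numbers of modulus at most 1, and let S be the 3×3 Hermitian matrix with diagonal S11, S22, S33 and S12 = √S11 · g12 · √S22, S23 = √S22 · g23 · √S33, S13 = √S11 · (g12·g23 + d12·g13·d23) · √S33, where d_{kj} = √(1−|g_{kj}|²). Then S = G* G, where G is the upper triangular matrix with rows (√S11, g12·√S22, (g12·g23 + d12·g13·d23)·√S33), (0, d12·√S22, (d12·g23 − conj(g12)·g13·d23)·√S33), and (0, 0, d13·d23·√S33). -/

import Mathlib

open Matrix

/-- the d = 3 scalar case of the Cholesky factorization `S = G* G`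
produced by the parametrization. -/
theorem stmt_3 (S11 S22 S33 : ℝ) (h11 : 0 ≤ S11) (h22 : 0 ≤ S22) (h33 : 0 ≤ S33)
    (g12 g23 g13 : ℂ) (hg12 : ‖g12‖ ≤ 1) (hg23 : ‖g23‖ ≤ 1) (hg13 : ‖g13‖ ≤ 1)
    (d12 d23 d13 : ℝ)
    (hd12 : d12 = Real.sqrt (1 - ‖g12‖ ^ 2)) (hd23 : d23 = Real.sqrt (1 - ‖g23‖ ^ 2))
    (hd13 : d13 = Real.sqrt (1 - ‖g13‖ ^ 2))
    (S G : Matrix (Fin 3) (Fin 3) ℂ)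
    (hS : S = !![(S11 : ℂ),
                 (Real.sqrt S11 : ℂ) * g12 * (Real.sqrt S22 : ℂ),
                 (Real.sqrt S11 : ℂ) * (g12 * g23 + (d12 : ℂ) * g13 * (d23 : ℂ)) *
                   (Real.sqrt S33 : ℂ);
                 star ((Real.sqrt S11 : ℂ) * g12 * (Real.sqrt S22 : ℂ)),
                 (S22 : ℂ),
                 (Real.sqrt S22 : ℂ) * g23 * (Real.sqrt S33 : ℂ);
                 star ((Real.sqrt S11 : ℂ) * (g12 * g23 + (d12 : ℂ) * g13 * (d23 : ℂ)) *
                   (Real.sqrt S33 : ℂ)),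
                 star ((Real.sqrt S22 : ℂ) * g23 * (Real.sqrt S33 : ℂ)),
                 (S33 : ℂ)])
    (hG : G = !![(Real.sqrt S11 : ℂ),
                 g12 * (Real.sqrt S22 : ℂ),
                 (g12 * g23 + (d12 : ℂ) * g13 * (d23 : ℂ)) * (Real.sqrt S33 : ℂ);
                 0,
                 (d12 : ℂ) * (Real.sqrt S22 : ℂ),
                 ((d12 : ℂ) * g23 - star g12 * g13 * (d23 : ℂ)) * (Real.sqrt S33 : ℂ);
                 0, 0, (d13 : ℂ) * (d23 : ℂ) * (Real.sqrt S33 : ℂ)]) :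
    S = Gᴴ * G := by
  have e11 : ((Real.sqrt S11 : ℝ) : ℂ) ^ 2 = (S11 : ℂ) := by
    norm_cast; exact Real.sq_sqrt h11
  have e22 : ((Real.sqrt S22 : ℝ) : ℂ) ^ 2 = (S22 : ℂ) := by
    norm_cast; exact Real.sq_sqrt h22
  have e33 : ((Real.sqrt S33 : ℝ) : ℂ) ^ 2 = (S33 : ℂ) := by
    norm_cast; exact Real.sq_sqrt h33
  have key : ∀ g : ℂ, ‖g‖ ≤ 1 →
      ((Real.sqrt (1 - ‖g‖ ^ 2) : ℝ) : ℂ) ^ 2 = 1 - (starRingEnd ℂ) g * g := by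
    intro g hg
    have h0 : (0:ℝ) ≤ 1 - ‖g‖ ^ 2 := by
      nlinarith [norm_nonneg g]
    have hm := Complex.mul_conj g
    rw [Complex.normSq_eq_norm_sq] at hm
    have h1 : ((1 - ‖g‖ ^ 2 : ℝ) : ℂ) = 1 - (starRingEnd ℂ) g * g := by
      push_cast at hm ⊢
      linear_combination hm
    rw [← h1]; norm_cast; exact Real.sq_sqrt h0
  have f12 := key g12 hg12
  have f23 := key g23 hg23
  have f13 := key g13 hg13
  subst hS hG hd12 hd23 hd13
  ext i j
  fin_cases i <;> fin_cases j <;>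
    simp [Matrix.mul_apply, Fin.sum_univ_three, Matrix.conjTranspose_apply,
      Matrix.vecHead, Matrix.vecTail] <;>
    ring_nf <;>
    simp only [f12, f23, f13, e11, e22, e33] <;>
    ring_nf
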